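/- For any two tones (v,f) and (v',f') and any T>0, with dist((v,f),(v',f')) := ((1/T)∫_0^T |v e^{2πift} - v' e^{2πif't}|^2 dt)^{1/2}, one has dist((v,f),(v',f')) ≍ |v|·min(1, T|f-f'|) + |v-v'| up to universal multiplicative constants. -/

import Mathlib

open MeasureTheory Real

/-! ### Auxiliary trigonometric and complex-analytic lemmas -/

/-- Sixth order Taylor lower bound on cosine. -/
lemma tone_aux_cos_taylor_lb {x : ℝ} (hx : |x| ≤ 1) :
    1 - x^2/2 + x^4/24 - x^6/600 ≤ Real.cos x := by
  have hb := Complex.exp_bound (x := (x:ℂ) * Complex.I) (by simpa using hx) (n := 7) (by norm_num)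
  have hsum : (∑ m ∈ Finset.range 7, ((x:ℂ) * Complex.I) ^ m / m.factorial).re
      = 1 - x^2/2 + x^4/24 - x^6/720 := by
    simp [Finset.sum_range_succ, Nat.factorial, pow_succ, Complex.add_re, Complex.div_re]
    ring
  have hre : |Real.cos x - (1 - x^2/2 + x^4/24 - x^6/720)| ≤
      |x| ^ 7 * (8 * ((5040:ℝ) * 7)⁻¹) := by
    have h1 : Real.cos x - (1 - x^2/2 + x^4/24 - x^6/720)
        = (Complex.exp ((x:ℂ) * Complex.I)
            - ∑ m ∈ Finset.range 7, ((x:ℂ) * Complex.I) ^ m / m.factorial).re := by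
      rw [Complex.sub_re, hsum, Complex.exp_ofReal_mul_I_re]
    rw [h1]
    refine le_trans (Complex.abs_re_le_norm _) (le_trans hb ?_)
    simp [Complex.norm_def, Complex.normSq_mul, Real.sqrt_mul_self_eq_abs]
    norm_num [Nat.factorial]
  have h7 : |x|^7 ≤ x^6 := by
    have h1 : |x|^7 ≤ |x|^6 := pow_le_pow_of_le_one (abs_nonneg x) hx (by norm_num)
    have h2 : |x|^6 = x^6 := by rw [← abs_pow]; exact abs_of_nonneg (by positivity)
    linarith
  have := abs_le.1 hre
  nlinarith [this.1, this.2, pow_nonneg (abs_nonneg x) 7]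

lemma tone_aux_h_mono : MonotoneOn (fun x : ℝ => x^2 - 2 + 2 * Real.cos x) (Set.Ici 0) := by
  have hd : ∀ x : ℝ, HasDerivAt (fun x : ℝ => x^2 - 2 + 2 * Real.cos x)
      (2*x - 2*Real.sin x) x := by
    intro x
    have h1 : HasDerivAt (fun x : ℝ => x^2) (2*x) x := by
      simpa using hasDerivAt_pow 2 x
    have h2 := (Real.hasDerivAt_cos x).const_mul (2:ℝ)
    exact ((h1.sub_const 2).add h2).congr_deriv (by ring)
  refine monotoneOn_of_deriv_nonneg (convex_Ici 0) (by fun_prop)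
    (fun x _ => (hd x).differentiableAt.differentiableWithinAt) ?_
  intro x hx
  rw [(hd x).deriv]
  have hx0 : (0:ℝ) ≤ x := le_of_lt (by simpa using hx)
  have := Real.sin_le hx0
  linarith

/-- The key inequality: `x² - 2 + 2cos x ≥ min(x²,x⁴)/60`. -/
lemma tone_aux_key_h (x : ℝ) : min (x^2) (x^4) / 60 ≤ x^2 - 2 + 2 * Real.cos x := by
  wlog hx : 0 ≤ x generalizing x
  · have h := this (-x) (by linarith [le_of_not_ge hx])
    have e1 : (-x)^2 = x^2 := by ring
    have e2 : (-x)^4 = x^4 := by ring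
    rw [e1, e2, Real.cos_neg] at h
    exact h
  rcases le_or_gt x 1 with h1 | h1
  · have hx2 : x^2 ≤ 1 := by nlinarith
    have ht := tone_aux_cos_taylor_lb (x := x) (by rwa [abs_of_nonneg hx])
    have hmin : min (x^2) (x^4) = x^4 := by
      apply min_eq_right
      nlinarith [pow_nonneg hx 2]
    have h64 : x^6 ≤ x^4 := by nlinarith [pow_nonneg hx 4]
    rw [hmin]
    linarith [pow_nonneg hx 4]
  · have hx2 : 1 ≤ x^2 := by nlinarith
    have hmin : min (x^2) (x^4) = x^2 := by
      apply min_eq_left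
      nlinarith [sq_nonneg x]
    rw [hmin]
    rcases le_or_gt x 2.1 with h2 | h2
    · have hm := tone_aux_h_mono (Set.mem_Ici.2 (by norm_num : (0:ℝ) ≤ 1))
        (Set.mem_Ici.2 (by linarith)) h1.le
      have ht := tone_aux_cos_taylor_lb (x := (1:ℝ)) (by norm_num)
      simp only at hm
      norm_num at ht hm
      nlinarith
    · have := Real.neg_one_le_cos x
      nlinarith

lemma tone_aux_two_sub_two_cos_le (θ : ℝ) : 2 - 2 * Real.cos θ ≤ θ^2 := by
  have h1 := Real.cos_sq (θ/2)
  rw [show 2*(θ/2) = θ by ring] at h1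
  have h2 : Real.sin (θ/2)^2 + Real.cos (θ/2)^2 = 1 := Real.sin_sq_add_cos_sq _
  have h3 : |Real.sin (θ/2)| ≤ |θ/2| := Real.abs_sin_le_abs
  have h4 : Real.sin (θ/2)^2 ≤ (θ/2)^2 := by
    rw [← sq_abs, ← sq_abs (θ/2)]
    exact pow_le_pow_left₀ (abs_nonneg _) h3 2
  nlinarith

lemma tone_aux_norm_exp_I_sub_one_sq (θ : ℝ) :
    ‖Complex.exp ((θ:ℂ) * Complex.I) - 1‖^2 = 2 - 2 * Real.cos θ := by
  rw [Complex.sq_norm]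
  simp [Complex.normSq_apply, Complex.sub_re, Complex.sub_im,
    Complex.exp_ofReal_mul_I_re, Complex.exp_ofReal_mul_I_im]
  nlinarith [Real.sin_sq_add_cos_sq θ]

lemma tone_aux_norm_exp_I_sub_one_le (θ : ℝ) : ‖Complex.exp ((θ:ℂ) * Complex.I) - 1‖ ≤ |θ| := by
  have h := tone_aux_norm_exp_I_sub_one_sq θ
  have h2 := tone_aux_two_sub_two_cos_le θ
  nlinarith [norm_nonneg (Complex.exp ((θ:ℂ) * Complex.I) - 1), abs_nonneg θ, sq_abs θ]

lemma tone_aux_norm_exp_I_sub_one_le_two (θ : ℝ) :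
    ‖Complex.exp ((θ:ℂ) * Complex.I) - 1‖ ≤ 2 := by
  calc ‖Complex.exp ((θ:ℂ) * Complex.I) - 1‖ ≤ ‖Complex.exp ((θ:ℂ) * Complex.I)‖ + ‖(1:ℂ)‖ :=
        norm_sub_le _ _
    _ ≤ 2 := by
        rw [Complex.norm_exp_ofReal_mul_I]
        norm_num

/-! ### The averaged exponential `S` and its properties -/

noncomputable def tone_Sfun (φ : ℝ) : ℂ :=
  (Complex.exp ((φ:ℂ) * Complex.I) - 1) / ((φ:ℂ) * Complex.I)

lemma tone_normSq_Sfun {φ : ℝ} (hφ : φ ≠ 0) :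
    Complex.normSq (tone_Sfun φ) = (2 - 2 * Real.cos φ) / φ^2 := by
  unfold tone_Sfun
  rw [Complex.normSq_div, ← tone_aux_norm_exp_I_sub_one_sq φ]
  congr 1
  · rw [Complex.sq_norm]
  · simp [Complex.normSq_mul, Complex.normSq_I]; ring

lemma tone_one_sub_normSq_Sfun {φ : ℝ} (hφ : φ ≠ 0) :
    min 1 (φ^2) / 60 ≤ 1 - Complex.normSq (tone_Sfun φ) := by
  rw [tone_normSq_Sfun hφ]
  have hφ2 : (0:ℝ) < φ^2 := by positivity
  have e1 : 1 - (2 - 2*Real.cos φ)/φ^2 = (φ^2 - 2 + 2*Real.cos φ)/φ^2 := by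
    field_simp
    ring
  rw [e1]
  have e2 : min 1 (φ^2) = min (φ^2) (φ^4) / φ^2 := by
    rcases le_total (1:ℝ) (φ^2) with h' | h'
    · rw [min_eq_left h', min_eq_left (by nlinarith), div_self hφ2.ne']
    · rw [min_eq_right h', min_eq_right (by nlinarith)]
      field_simp
  rw [e2, div_div]
  rw [div_le_div_iff₀ (by positivity) hφ2]
  calc min (φ^2) (φ^4) * φ^2 = (min (φ^2) (φ^4) / 60) * (60 * φ^2) := by ring
    _ ≤ (φ^2 - 2 + 2*Real.cos φ) * (φ^2 * 60) := by
        rw [show (60:ℝ) * φ^2 = φ^2 * 60 by ring]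
        exact mul_le_mul_of_nonneg_right (tone_aux_key_h φ) (by positivity)

lemma tone_norm_one_sub_Sfun {φ : ℝ} (hφ : φ ≠ 0) :
    ‖1 - tone_Sfun φ‖ ≤ 3 * min 1 |φ| := by
  rcases le_or_gt |φ| 1 with h1 | h1
  · have hb := Complex.exp_bound (x := (φ:ℂ) * Complex.I) (by simpa using h1) (n := 2)
      (by norm_num)
    have hsum : (∑ m ∈ Finset.range 2, ((φ:ℂ) * Complex.I) ^ m / m.factorial)
        = 1 + (φ:ℂ) * Complex.I := by
      simp [Finset.sum_range_succ]
    rw [hsum] at hb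
    have habs : ‖(φ:ℂ) * Complex.I‖ = |φ| := by
      simp
    have he : 1 - tone_Sfun φ
        = -(Complex.exp ((φ:ℂ) * Complex.I) - (1 + (φ:ℂ) * Complex.I)) / ((φ:ℂ) * Complex.I) := by
      unfold tone_Sfun
      have hne : ((φ:ℂ) * Complex.I) ≠ 0 := by
        simp [Complex.ofReal_eq_zero, hφ, Complex.I_ne_zero]
      have hφc : (φ:ℂ) ≠ 0 := Complex.ofReal_ne_zero.2 hφ
      field_simp
      ring
    rw [he, min_eq_right h1]
    rw [norm_div, norm_neg]
    rw [show ‖(φ:ℂ) * Complex.I‖ = |φ| from habs]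
    rw [div_le_iff₀ (abs_pos.2 hφ)]
    calc ‖Complex.exp ((φ:ℂ) * Complex.I) - (1 + (φ:ℂ) * Complex.I)‖
        ≤ |φ|^2 * (3 * ((2:ℝ)*2)⁻¹) := by
          have := hb
          rw [habs] at this
          simpa [Nat.factorial] using this
      _ ≤ 3 * |φ| * |φ| := by nlinarith [abs_nonneg φ]
  · rw [min_eq_left h1.le]
    have hS : ‖tone_Sfun φ‖ ≤ 2 := by
      unfold tone_Sfun
      rw [norm_div]
      have h2 := tone_aux_norm_exp_I_sub_one_le_two φ
      have habs : ‖(φ:ℂ) * Complex.I‖ = |φ| := by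
        simp [Complex.normSq_mul, Complex.normSq_I,
          Complex.normSq_ofReal, Real.sqrt_mul_self_eq_abs]
      rw [habs, div_le_iff₀ (lt_of_lt_of_le one_pos h1.le)]
      nlinarith
    calc ‖1 - tone_Sfun φ‖ ≤ ‖(1:ℂ)‖ + ‖tone_Sfun φ‖ := norm_sub_le _ _
      _ ≤ 3 * 1 := by rw [norm_one]; linarith

/-! ### Integral computations -/

lemma tone_integral_sq (v v' : ℂ) (δ T : ℝ) :
    ∫ t in (0:ℝ)..T, ‖v * Complex.exp (((δ*t:ℝ):ℂ) * Complex.I) - v'‖^2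
    = T * (Complex.normSq v + Complex.normSq v')
      - 2 * ((v * (starRingEnd ℂ) v')
          * ∫ t in (0:ℝ)..T, Complex.exp (((δ*t:ℝ):ℂ) * Complex.I)).re := by
  have hpt : ∀ t : ℝ, ‖v * Complex.exp (((δ*t:ℝ):ℂ) * Complex.I) - v'‖^2
      = (Complex.normSq v + Complex.normSq v')
        - 2 * ((v * (starRingEnd ℂ) v') * Complex.exp (((δ*t:ℝ):ℂ) * Complex.I)).re := by
    intro t
    rw [Complex.sq_norm, Complex.normSq_sub, Complex.normSq_mul]
    rw [show Complex.normSq (Complex.exp (((δ*t:ℝ):ℂ) * Complex.I)) = 1 by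
      rw [Complex.normSq_eq_norm_sq, Complex.norm_exp_ofReal_mul_I]; norm_num]
    rw [show v * Complex.exp (((δ*t:ℝ):ℂ) * Complex.I) * (starRingEnd ℂ) v'
      = (v * (starRingEnd ℂ) v') * Complex.exp (((δ*t:ℝ):ℂ) * Complex.I) by ring]
    ring
  have hi : IntervalIntegrable
      (fun t : ℝ => (v * (starRingEnd ℂ) v') * Complex.exp (((δ*t:ℝ):ℂ) * Complex.I))
      volume 0 T := (Continuous.intervalIntegrable (by fun_prop) 0 T)
  simp only [hpt]
  rw [intervalIntegral.integral_sub (intervalIntegrable_const)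
    (by exact (Continuous.intervalIntegrable (by fun_prop) 0 T))]
  rw [intervalIntegral.integral_const, intervalIntegral.integral_const_mul]
  have hre : ∫ t in (0:ℝ)..T, ((v * (starRingEnd ℂ) v') * Complex.exp (((δ*t:ℝ):ℂ) * Complex.I)).re
      = ((v * (starRingEnd ℂ) v')
          * ∫ t in (0:ℝ)..T, Complex.exp (((δ*t:ℝ):ℂ) * Complex.I)).re := by
    have h := Complex.reCLM.intervalIntegral_comp_comm hi
    simp only [Complex.reCLM_apply] at h
    rw [h, intervalIntegral.integral_const_mul]
  rw [hre]
  simp [smul_eq_mul]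

lemma tone_integral_E_eq {δ : ℝ} (hδ : δ ≠ 0) (T : ℝ) :
    ∫ t in (0:ℝ)..T, Complex.exp (((δ*t:ℝ):ℂ) * Complex.I)
    = (Complex.exp (((δ*T:ℝ):ℂ) * Complex.I) - 1) / ((δ:ℂ) * Complex.I) := by
  have hc : ((δ:ℂ) * Complex.I) ≠ 0 := by
    simp [Complex.ofReal_eq_zero, hδ, Complex.I_ne_zero]
  simp_rw [show ∀ t:ℝ, (((δ*t:ℝ):ℂ)) * Complex.I = ((δ:ℂ) * Complex.I) * (t:ℂ) from
    fun t => by push_cast; ring]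
  rw [integral_exp_mul_complex hc]
  norm_num

lemma tone_Q_identity (v v' S : ℂ) :
    Complex.normSq v + Complex.normSq v' - 2*((v * (starRingEnd ℂ) v')*S).re
    = Complex.normSq (v*S - v') + Complex.normSq v * (1 - Complex.normSq S) := by
  simp [Complex.normSq_sub, Complex.normSq_mul, Complex.normSq_apply, Complex.mul_re,
    Complex.mul_im, Complex.conj_re, Complex.conj_im]
  ring

lemma tone_upper_est (v v' : ℂ) (δ T : ℝ) (hT : 0 < T) (M : ℝ)
    (hM : ∀ t ∈ Set.Icc (0:ℝ) T, ‖v * Complex.exp (((δ*t:ℝ):ℂ) * Complex.I) - v'‖ ≤ M) :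
    Real.sqrt ((1/T) * ∫ t in (0:ℝ)..T,
      ‖v * Complex.exp (((δ*t:ℝ):ℂ) * Complex.I) - v'‖^2) ≤ M := by
  have hM0 : 0 ≤ M := le_trans (norm_nonneg _) (hM 0 ⟨le_refl 0, hT.le⟩)
  have hint : (∫ t in (0:ℝ)..T, ‖v * Complex.exp (((δ*t:ℝ):ℂ) * Complex.I) - v'‖^2)
      ≤ T * M^2 := by
    calc (∫ t in (0:ℝ)..T, ‖v * Complex.exp (((δ*t:ℝ):ℂ) * Complex.I) - v'‖^2)
        ≤ ∫ _t in (0:ℝ)..T, M^2 := by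
          apply intervalIntegral.integral_mono_on hT.le
            (Continuous.intervalIntegrable (by fun_prop) 0 T) intervalIntegrable_const
          intro t ht
          exact pow_le_pow_left₀ (norm_nonneg _) (hM t ht) 2
      _ = T * M^2 := by rw [intervalIntegral.integral_const, smul_eq_mul]; ring
  have h2 : (1/T) * (∫ t in (0:ℝ)..T, ‖v * Complex.exp (((δ*t:ℝ):ℂ) * Complex.I) - v'‖^2)
      ≤ M^2 := by
    rw [show M^2 = (1/T) * (T * M^2) by field_simp]
    exact mul_le_mul_of_nonneg_left hint (by positivity)
  calc Real.sqrt ((1/T) * ∫ t in (0:ℝ)..T,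
        ‖v * Complex.exp (((δ*t:ℝ):ℂ) * Complex.I) - v'‖^2)
      ≤ Real.sqrt (M^2) := Real.sqrt_le_sqrt h2
    _ = M := Real.sqrt_sq hM0

/-- Tone distance: `((1/T) ∫_0^T |v e^{2πift} - v' e^{2πif't}|² dt)^{1/2}`. -/
noncomputable def toneDist (v v' : ℂ) (f f' T : ℝ) : ℝ :=
  Real.sqrt ((1 / T) * ∫ t in (0:ℝ)..T,
    ‖v * Complex.exp (2 * π * f * t * Complex.I)
      - v' * Complex.exp (2 * π * f' * t * Complex.I)‖ ^ 2)

set_option maxHeartbeats 2000000 in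
/-- the tone distance is equivalent, up to universal constants,
to `|v| · min(1, T|f-f'|) + |v - v'|`. -/
theorem tone_dist_equiv :
    ∃ c C : ℝ, 0 < c ∧ 0 < C ∧
      ∀ (v v' : ℂ) (f f' T : ℝ), 0 < T →
        c * (‖v‖ * min 1 (T * |f - f'|) + ‖v - v'‖) ≤ toneDist v v' f f' T ∧
        toneDist v v' f f' T ≤ C * (‖v‖ * min 1 (T * |f - f'|) + ‖v - v'‖) := by
  refine ⟨1/200, 8, by norm_num, by norm_num, fun v v' f f' T hT => ?_⟩
  have hx0 : (0:ℝ) ≤ T * |f - f'| := by positivity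
  set x : ℝ := T * |f - f'| with hxdef
  set m : ℝ := min 1 x with hmdef
  have hm0 : 0 ≤ m := le_min (by norm_num) hx0
  have hm1 : m ≤ 1 := min_le_left _ _
  clear_value x m
  rcases eq_or_ne f f' with hff | hff
  · -- equal frequencies
    have hD : toneDist v v' f f' T = ‖v - v'‖ := by
      subst hff
      unfold toneDist
      have hpt : ∀ t : ℝ, ‖v * Complex.exp (2 * π * f * t * Complex.I)
          - v' * Complex.exp (2 * π * f * t * Complex.I)‖ ^ 2 = ‖v - v'‖^2 := by
        intro t
        rw [← sub_mul, norm_mul]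
        rw [show (2 * ↑π * ↑f * ↑t * Complex.I : ℂ) = ((2*π*f*t : ℝ):ℂ) * Complex.I by
          push_cast; ring]
        rw [show ‖Complex.exp (((2*π*f*t : ℝ):ℂ) * Complex.I)‖ = 1 from
          Complex.norm_exp_ofReal_mul_I _]
        ring
      rw [intervalIntegral.integral_congr (fun t _ => hpt t)]
      rw [intervalIntegral.integral_const]
      rw [smul_eq_mul, sub_zero, show (1/T) * (T * ‖v - v'‖^2) = ‖v-v'‖^2 by field_simp]
      exact Real.sqrt_sq (norm_nonneg _)
    have hm : m = 0 := by simp [hmdef, hxdef, hff]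
    rw [hD, hm]
    constructor
    · nlinarith [norm_nonneg (v-v'), norm_nonneg v]
    · nlinarith [norm_nonneg (v-v'), norm_nonneg v]
  · -- distinct frequencies
    set δ : ℝ := 2*π*(f-f') with hδdef
    have hδ0 : δ ≠ 0 := by
      rw [hδdef]
      have := Real.pi_ne_zero
      have h2 : f - f' ≠ 0 := sub_ne_zero.2 hff
      positivity
    set φ : ℝ := δ * T with hφdef
    have hφ0 : φ ≠ 0 := mul_ne_zero hδ0 (ne_of_gt hT)
    clear_value δ φ
    have habsδ : |δ| = 2*π*|f - f'| := by
      rw [hδdef, abs_mul, abs_of_pos (by positivity : (0:ℝ) < 2*π)]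
    have habsφ : |φ| = 2*π*x := by
      rw [hφdef, abs_mul, habsδ, abs_of_pos hT, hxdef]; ring
    -- pointwise rewrite of the integrand
    have hpt : ∀ t : ℝ, ‖v * Complex.exp (2 * π * f * t * Complex.I)
        - v' * Complex.exp (2 * π * f' * t * Complex.I)‖ ^ 2
        = ‖v * Complex.exp (((δ*t:ℝ):ℂ) * Complex.I) - v'‖ ^ 2 := by
      intro t
      have key : v * Complex.exp (2 * π * f * t * Complex.I)
          - v' * Complex.exp (2 * π * f' * t * Complex.I)
          = Complex.exp (((2*π*f'*t:ℝ):ℂ) * Complex.I)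
            * (v * Complex.exp (((δ*t:ℝ):ℂ) * Complex.I) - v') := by
        rw [show (2 * ↑π * ↑f * ↑t * Complex.I : ℂ)
            = ((2*π*f'*t:ℝ):ℂ) * Complex.I + ((δ*t:ℝ):ℂ) * Complex.I by
          rw [hδdef]; push_cast; ring]
        rw [Complex.exp_add]
        rw [show (2 * ↑π * ↑f' * ↑t * Complex.I : ℂ) = ((2*π*f'*t:ℝ):ℂ) * Complex.I by
          push_cast; ring]
        ring
      rw [key, norm_mul,
        show ‖Complex.exp (((2*π*f'*t:ℝ):ℂ) * Complex.I)‖ = 1 from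
          Complex.norm_exp_ofReal_mul_I _,
        one_mul]
    have hDrw : toneDist v v' f f' T
        = Real.sqrt ((1/T) * ∫ t in (0:ℝ)..T,
            ‖v * Complex.exp (((δ*t:ℝ):ℂ) * Complex.I) - v'‖ ^ 2) := by
      unfold toneDist
      rw [intervalIntegral.integral_congr (fun t _ => hpt t)]
    constructor
    · -- lower bound
      have hI : (Complex.exp (((δ*T:ℝ):ℂ) * Complex.I) - 1) / ((δ:ℂ) * Complex.I)
          = (T:ℂ) * tone_Sfun φ := by
        unfold tone_Sfun
        rw [hφdef]
        have hδc : (δ:ℂ) ≠ 0 := Complex.ofReal_ne_zero.2 hδ0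
        have hTc : (T:ℂ) ≠ 0 := Complex.ofReal_ne_zero.2 (ne_of_gt hT)
        have hIc : Complex.I ≠ 0 := Complex.I_ne_zero
        push_cast
        field_simp
      have hQ : (1/T) * (T * (Complex.normSq v + Complex.normSq v')
            - 2 * ((v * (starRingEnd ℂ) v') * ((T:ℂ) * tone_Sfun φ)).re)
          = Complex.normSq v + Complex.normSq v'
            - 2*((v * (starRingEnd ℂ) v') * tone_Sfun φ).re := by
        rw [show (v * (starRingEnd ℂ) v') * ((T:ℂ) * tone_Sfun φ)
          = (T:ℂ) * ((v * (starRingEnd ℂ) v') * tone_Sfun φ) by ring,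
          Complex.re_ofReal_mul]
        field_simp
      have hDval : toneDist v v' f f' T
          = Real.sqrt (Complex.normSq (v * tone_Sfun φ - v')
              + Complex.normSq v * (1 - Complex.normSq (tone_Sfun φ))) := by
        rw [hDrw, tone_integral_sq, tone_integral_E_eq hδ0, hI, hQ, tone_Q_identity]
      rw [hDval]
      set S : ℂ := tone_Sfun φ with hSdef
      set QQ : ℝ := Complex.normSq (v * S - v')
          + Complex.normSq v * (1 - Complex.normSq S) with hQQdef
      clear_value QQ
      have hnv : Complex.normSq v = ‖v‖^2 := by
        rw [Complex.sq_norm]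
      have hnvs : Complex.normSq (v * S - v') = ‖v * S - v'‖^2 := by
        rw [Complex.sq_norm]
      -- m² ≤ min 1 (φ²)
      have hφ2 : m^2 ≤ min 1 (φ^2) := by
        have hsq : φ^2 = (2*π*x)^2 := by rw [← sq_abs φ, habsφ]
        have hpi1 : (1:ℝ) ≤ 4*π^2 := by nlinarith [Real.pi_gt_three]
        have hx2 : x^2 ≤ φ^2 := by
          nlinarith [hsq, mul_le_mul_of_nonneg_right hpi1 (sq_nonneg x)]
        rcases le_total x 1 with h' | h'
        · rw [hmdef, min_eq_right h']
          have : x^2 ≤ 1 := by nlinarith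
          exact le_min (by nlinarith) (by nlinarith)
        · rw [hmdef, min_eq_left h']
          have : 1 ≤ φ^2 := by nlinarith
          simpa using le_min (le_refl 1) this
      -- min 1 |φ| ≤ 2π m
      have hminφ : min 1 |φ| ≤ 2*π*m := by
        rcases le_total x 1 with h' | h'
        · rw [hmdef, min_eq_right h']
          calc min 1 |φ| ≤ |φ| := min_le_right _ _
            _ = 2*π*x := habsφ
        · rw [hmdef, min_eq_left h']
          calc min 1 |φ| ≤ 1 := min_le_left _ _
            _ ≤ 2*π*1 := by nlinarith [Real.pi_gt_three]
      have hSle := tone_one_sub_normSq_Sfun hφ0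
      have hS1 := tone_norm_one_sub_Sfun hφ0
      -- first lower bound
      have hQlb1 : (‖v‖*m/8)^2 ≤ QQ := by
        have hc : ‖v‖^2 * (m^2/60) ≤ ‖v‖^2 * (1 - Complex.normSq S) := by
          apply mul_le_mul_of_nonneg_left _ (by positivity)
          calc m^2/60 ≤ min 1 (φ^2)/60 := by linarith
            _ ≤ 1 - Complex.normSq S := hSle
        have : (‖v‖*m/8)^2 ≤ ‖v‖^2 * (m^2/60) := by nlinarith [sq_nonneg (‖v‖*m)]
        rw [hQQdef, hnv]
        nlinarith [Complex.normSq_nonneg (v * S - v')]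
      have hs1 : ‖v‖*m/8 ≤ Real.sqrt QQ := by
        have h := Real.sqrt_le_sqrt hQlb1
        rwa [Real.sqrt_sq (by positivity)] at h
      -- second lower bound
      have hs2 : ‖v * S - v'‖ ≤ Real.sqrt QQ := by
        have h1 : ‖v * S - v'‖^2 ≤ QQ := by
          rw [hQQdef, ← hnvs, hnv]
          have : 0 ≤ 1 - Complex.normSq S := le_trans (by positivity) hSle
          nlinarith [sq_nonneg ‖v‖]
        have h := Real.sqrt_le_sqrt h1
        rwa [Real.sqrt_sq (norm_nonneg _)] at h
      -- triangle inequality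
      have htri : ‖v - v'‖ ≤ ‖v * S - v'‖ + ‖v‖ * (3 * min 1 |φ|) := by
        have hd : v - v' = (v * S - v') + v * (1 - S) := by ring
        calc ‖v - v'‖ = ‖(v * S - v') + v * (1 - S)‖ := by rw [← hd]
          _ ≤ ‖v * S - v'‖ + ‖v * (1 - S)‖ := norm_add_le _ _
          _ ≤ ‖v * S - v'‖ + ‖v‖ * (3 * min 1 |φ|) := by
              rw [norm_mul]
              exact add_le_add_right (mul_le_mul_of_nonneg_left hS1 (norm_nonneg v)) _
      have hfin : ‖v - v'‖ ≤ Real.sqrt QQ + 19 * (‖v‖ * m) := by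
        have h3 : ‖v‖ * (3 * min 1 |φ|) ≤ 19 * (‖v‖ * m) := by
          have : 3 * min 1 |φ| ≤ 19 * m := by nlinarith [Real.pi_lt_d2]
          nlinarith [norm_nonneg v, hm0, min_le_left 1 |φ|,
            le_min (le_refl (1:ℝ)) (le_refl (1:ℝ))]
        linarith [hs2, htri]
      have hsn : 0 ≤ Real.sqrt QQ := Real.sqrt_nonneg _
      linarith [hs1, hfin]
    · -- upper bound
      rw [hDrw]
      have hub : Real.sqrt ((1/T) * ∫ t in (0:ℝ)..T,
          ‖v * Complex.exp (((δ*t:ℝ):ℂ) * Complex.I) - v'‖ ^ 2)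
          ≤ 2*π*(‖v‖*m) + ‖v - v'‖ := by
        apply tone_upper_est v v' δ T hT
        intro t ht
        have hE : ‖Complex.exp (((δ*t:ℝ):ℂ) * Complex.I) - 1‖ ≤ 2*π*m := by
          rcases le_total x 1 with h' | h'
          · calc ‖Complex.exp (((δ*t:ℝ):ℂ) * Complex.I) - 1‖ ≤ |δ*t| :=
                tone_aux_norm_exp_I_sub_one_le _
              _ ≤ 2*π*m := by
                  rw [abs_mul, habsδ, hmdef, min_eq_right h', hxdef]
                  rw [abs_of_nonneg ht.1]
                  have : |f - f'| * t ≤ |f - f'| * T :=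
                    mul_le_mul_of_nonneg_left ht.2 (abs_nonneg _)
                  nlinarith [Real.pi_pos, abs_nonneg (f-f')]
          · calc ‖Complex.exp (((δ*t:ℝ):ℂ) * Complex.I) - 1‖ ≤ 2 :=
                tone_aux_norm_exp_I_sub_one_le_two _
              _ ≤ 2*π*m := by
                  rw [hmdef, min_eq_left h']
                  nlinarith [Real.pi_gt_three]
        calc ‖v * Complex.exp (((δ*t:ℝ):ℂ) * Complex.I) - v'‖
            = ‖v * (Complex.exp (((δ*t:ℝ):ℂ) * Complex.I) - 1) + (v - v')‖ := by
              rw [show v * Complex.exp (((δ*t:ℝ):ℂ) * Complex.I) - v'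
                = v * (Complex.exp (((δ*t:ℝ):ℂ) * Complex.I) - 1) + (v - v') by ring]
          _ ≤ ‖v * (Complex.exp (((δ*t:ℝ):ℂ) * Complex.I) - 1)‖ + ‖v - v'‖ := norm_add_le _ _
          _ ≤ 2*π*(‖v‖*m) + ‖v - v'‖ := by
              rw [norm_mul]
              have := mul_le_mul_of_nonneg_left hE (norm_nonneg v)
              nlinarith [norm_nonneg v]
      calc Real.sqrt ((1/T) * ∫ t in (0:ℝ)..T,
            ‖v * Complex.exp (((δ*t:ℝ):ℂ) * Complex.I) - v'‖ ^ 2)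
          ≤ 2*π*(‖v‖*m) + ‖v - v'‖ := hub
        _ ≤ 8 * (‖v‖ * m + ‖v - v'‖) := by
            nlinarith [Real.pi_le_four, norm_nonneg v, hm0, norm_nonneg (v - v'),
              mul_nonneg (norm_nonneg v) hm0]
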